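/- arXiv:1405.3546 — 8 statements merged into one kernel-verified Lean document; each statement's English description precedes it below -/
import Mathlib

section
/- Let P be a coherent normal logic program and L a set of constraints such that SM(P ∪ L) = SM(P). If the constraint ⊥ ← naf a belongs to L for some atom a, then a is a cautious consequence of P, i.e., a ∈ CC(P). (This establishes soundness of the underestimates produced from learned constraints by ComputeStableModel*.) -/
/-- A rule of a normal logic program: head atom, positive body, negative body. -/
structure Rule (A : Type) where
  head : A
  pos : Finset A
  neg : Finset A

/-- An interpretation `I` is a model of a rule `r`: the head is true whenever the
positive body is contained in `I` and the negative body is disjoint from `I`. -/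
def modelsRule {A : Type} (I : Set A) (r : Rule A) : Prop :=
  ((↑r.pos : Set A) ⊆ I ∧ ∀ a ∈ r.neg, a ∉ I) → r.head ∈ I

/-- `I` is a model of the program `P`. -/
def modelsProg {A : Type} (I : Set A) (P : Set (Rule A)) : Prop :=
  ∀ r ∈ P, modelsRule I r

/-- The Gelfond–Lifschitz reduct `P^I`: delete rules whose negative body meets `I`,
and drop the negative body of the remaining rules. -/
def reduct {A : Type} (P : Set (Rule A)) (I : Set A) : Set (Rule A) :=
  {r' | ∃ r ∈ P, (∀ a ∈ r.neg, a ∉ I) ∧ r' = Rule.mk r.head r.pos ∅}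

/-- `M` is a stable model of `P` (with falsum atom `bot`): `M` is an interpretation
(`bot ∉ M`), `M` models the reduct `P^M`, and no proper subset of `M` does. -/
def SM {A : Type} (bot : A) (P : Set (Rule A)) : Set (Set A) :=
  {M | bot ∉ M ∧ modelsProg M (reduct P M) ∧ ∀ J, J ⊂ M → ¬ modelsProg J (reduct P M)}

/-- Cautious consequences: atoms belonging to every stable model of `P`. -/
def CC {A : Type} (bot : A) (P : Set (Rule A)) : Set A :=
  {a | ∀ M ∈ SM bot P, a ∈ M}

/-- Soundness of underestimates from learned constraints: if `⊥ ← naf a` is among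
constraints `L` implicit in a coherent program `P` (i.e. `SM (P ∪ L) = SM P`), then
`a` is a cautious consequence of `P`. -/
theorem learned_naf_constraint_sound {A : Type} [Countable A] (bot : A)
    (P : Set (Rule A)) (hP : P.Finite) (hcoh : (SM bot P).Nonempty)
    (L : Set (Rule A)) (hL : ∀ r ∈ L, r.head = bot)
    (heq : SM bot (P ∪ L) = SM bot P)
    (a : A) (ha : Rule.mk bot ∅ {a} ∈ L) :
    a ∈ CC bot P := by
  intro M hM
  by_contra haM
  have hM' : M ∈ SM bot (P ∪ L) := heq ▸ hM
  obtain ⟨hbot, hmod, -⟩ := hM'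
  have : Rule.mk bot (∅ : Finset A) (∅ : Finset A) ∈ reduct (P ∪ L) M := by
    refine ⟨Rule.mk bot ∅ {a}, Or.inr ha, ?_, rfl⟩
    intro x hx
    simp only [Finset.mem_singleton] at hx
    subst hx; exact haM
  exact hbot (hmod _ this (by simp))
end

section
/- The stable models of a normal logic program form an antichain with respect to set inclusion: if M, N ∈ SM(P) and M ⊆ N, then M = N. -/
/-- Stable models form an antichain with respect to set inclusion. -/
theorem stable_models_antichain {A : Type} [Countable A] (bot : A)
    (P : Set (Rule A)) (hP : P.Finite)
    (M N : Set A) (hM : M ∈ SM bot P) (hN : N ∈ SM bot P) (hMN : M ⊆ N) :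
    M = N := by
  by_contra hne
  have hss : M ⊂ N := ⟨hMN, fun h => hne (le_antisymm hMN h)⟩
  apply hN.2.2 M hss
  intro r' hr'
  obtain ⟨r, hrP, hneg, rfl⟩ := hr'
  intro ⟨hpos, _⟩
  have : Rule.mk r.head r.pos ∅ ∈ reduct P M :=
    ⟨r, hrP, fun a ha hM' => hneg a ha (hMN hM'), rfl⟩
  exact hM.2.1 _ this ⟨hpos, fun a ha => absurd ha (Finset.notMem_empty a)⟩
end

section
/- Let P be a coherent normal logic program and a an atom with a ≠ ⊥. Then a is a cautious consequence of P (a ∈ CC(P)) if and only if the program P ∪ {⊥ ← a} is incoherent, i.e., SM(P ∪ {⊥ ← a}) = ∅. (This is the correctness of a single coherence test of the iterative coherence testing procedure.) -/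
/-- Correctness of a single coherence test: for a coherent `P` and atom `a ≠ ⊥`,
`a ∈ CC P` iff `P ∪ {⊥ ← a}` is incoherent. -/
theorem cautious_iff_incoherent_with_constraint {A : Type} [Countable A] (bot : A)
    (P : Set (Rule A)) (hP : P.Finite) (hcoh : (SM bot P).Nonempty)
    (a : A) (ha : a ≠ bot) :
    a ∈ CC bot P ↔ SM bot (P ∪ {Rule.mk bot {a} ∅}) = ∅ := by
  set c : Rule A := Rule.mk bot {a} ∅ with hc
  have hred : ∀ M : Set A, reduct (P ∪ {c}) M = reduct P M ∪ {c} := by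
    intro M
    ext r'
    constructor
    · rintro ⟨r, hr, hneg, rfl⟩
      rcases hr with hr | hr
      · exact Or.inl ⟨r, hr, hneg, rfl⟩
      · right; rw [Set.mem_singleton_iff] at hr; subst hr; rfl
    · rintro (⟨r, hr, hneg, rfl⟩ | hr)
      · exact ⟨r, Or.inl hr, hneg, rfl⟩
      · rw [Set.mem_singleton_iff] at hr; subst hr
        exact ⟨c, Or.inr rfl, by simp [hc], by simp [hc]⟩
  have hmc : ∀ (J : Set A), a ∉ J → modelsRule J c := by
    intro J haJ h
    have : a ∈ J := h.1 (by simp [hc])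
    exact absurd this haJ
  have hkey : ∀ M, M ∈ SM bot (P ∪ {c}) ↔ M ∈ SM bot P ∧ a ∉ M := by
    intro M
    constructor
    · rintro ⟨hb, hm, hmin⟩
      have haM : a ∉ M := by
        intro haM
        have := hm c (by rw [hred]; exact Or.inr rfl)
        exact hb (this ⟨by simp [hc, haM], by simp [hc]⟩)
      refine ⟨⟨hb, ?_, ?_⟩, haM⟩
      · intro r hr; exact hm r (by rw [hred]; exact Or.inl hr)
      · intro J hJ hJm
        apply hmin J hJ
        rw [hred]
        intro r hr
        rcases hr with hr | hr
        · exact hJm r hr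
        · rw [Set.mem_singleton_iff] at hr; subst hr
          exact hmc J (fun haJ => haM (hJ.subset haJ))
    · rintro ⟨⟨hb, hm, hmin⟩, haM⟩
      refine ⟨hb, ?_, ?_⟩
      · rw [hred]; intro r hr
        rcases hr with hr | hr
        · exact hm r hr
        · rw [Set.mem_singleton_iff] at hr; subst hr; exact hmc M haM
      · intro J hJ hJm
        apply hmin J hJ
        intro r hr
        exact hJm r (by rw [hred]; exact Or.inl hr)
  constructor
  · intro hCC
    ext M
    simp only [Set.mem_empty_iff_false, iff_false]
    intro hM
    rcases (hkey M).1 hM with ⟨hMP, haM⟩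
    exact haM (hCC M hMP)
  · intro hempty M hM
    by_contra haM
    have : M ∈ SM bot (P ∪ {c}) := (hkey M).2 ⟨hM, haM⟩
    rw [hempty] at this
    exact this
end

section
/- Progress step of overestimate reduction: let P be a normal logic program and O a nonempty finite set of atoms with ⊥ ∉ O. If I ∈ SM(P ∪ {Constraint(O)}), then I ∈ SM(P), O is not a subset of I, and O ∩ I is a strict subset of O; moreover CC(P) ⊆ I, so if CC(P) ∩ Q ⊆ O for a set Q then also CC(P) ∩ Q ⊆ O ∩ I. Hence each iteration of overestimate reduction strictly shrinks the overestimate while keeping it a superset of the sought cautious consequences. -/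
/-- Progress step of overestimate reduction: a stable model of `P ∪ {Constraint O}`
is a stable model of `P` not containing all of `O`, so intersecting strictly shrinks
the overestimate while keeping it a superset of the sought cautious consequences. -/
theorem overestimate_reduction_progress {A : Type} [Countable A] (bot : A)
    (P : Set (Rule A)) (hP : P.Finite)
    (O : Finset A) (hO : O.Nonempty) (hbot : bot ∉ O)
    (I : Set A) (hI : I ∈ SM bot (P ∪ {Rule.mk bot O ∅})) :
    I ∈ SM bot P ∧ ¬ (↑O : Set A) ⊆ I ∧ (↑O ∩ I) ⊂ (↑O : Set A) ∧
    CC bot P ⊆ I ∧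
    ∀ Q : Set A, CC bot P ∩ Q ⊆ ↑O → CC bot P ∩ Q ⊆ ↑O ∩ I := by
  obtain ⟨hbotI, hmod, hmin⟩ := hI
  -- the constraint is in the reduct of the union
  have hcon : Rule.mk bot O ∅ ∈ reduct (P ∪ {Rule.mk bot O ∅}) I := by
    refine ⟨Rule.mk bot O ∅, Or.inr rfl, ?_, rfl⟩
    intro a ha; simp at ha
  -- O is not a subset of I
  have hOI : ¬ (↑O : Set A) ⊆ I := by
    intro h
    have := hmod _ hcon
    exact hbotI (this ⟨h, by intro a ha; simp at ha⟩)
  -- SM P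
  have hsub : reduct P I ⊆ reduct (P ∪ {Rule.mk bot O ∅}) I := by
    rintro r' ⟨r, hr, h1, h2⟩; exact ⟨r, Or.inl hr, h1, h2⟩
  have hSMP : I ∈ SM bot P := by
    refine ⟨hbotI, fun r hr => hmod r (hsub hr), ?_⟩
    intro J hJ hJmod
    apply hmin J hJ
    rintro r' (⟨r, hr | hr, h1, h2⟩)
    · exact hJmod r' ⟨r, hr, h1, h2⟩
    · subst hr; subst h2
      intro ⟨hpos, _⟩
      exact absurd (hpos.trans hJ.subset) hOI
  refine ⟨hSMP, hOI, ?_, ?_, ?_⟩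
  · constructor
    · exact Set.inter_subset_left
    · intro h
      exact hOI fun a ha => (h ha).2
  · intro a ha; exact ha I hSMP
  · intro Q h; intro a ha
    exact ⟨h ha, ha.1 I hSMP⟩
end

section
/- Progress step of enumeration of models: let P be a normal logic program and I_1, …, I_k ∈ SM(P) (each finite). If I ∈ SM(P ∪ {Constraint(I_1), …, Constraint(I_k)}), then I ∈ SM(P) and I ≠ I_j for every j ∈ {1, …, k}. Consequently, any sequence of stable models produced by iteratively adding the constraint eliminating the last found stable model consists of pairwise distinct stable models of P, so the enumeration terminates after at most |SM(P)| iterations. -/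
lemma sm_union_constraints {A : Type} (bot : A) (P C : Set (Rule A))
    (hC : ∀ r ∈ C, r.head = bot) (I : Set A) (hI : I ∈ SM bot (P ∪ C)) :
    I ∈ SM bot P ∧ ∀ r ∈ C, (∀ a ∈ r.neg, a ∉ I) → ¬ ((↑r.pos : Set A) ⊆ I) := by
  obtain ⟨hbot, hmod, hmin⟩ := hI
  have hsub : reduct P I ⊆ reduct (P ∪ C) I := by
    rintro r' ⟨r, hr, hneg, rfl⟩; exact ⟨r, Or.inl hr, hneg, rfl⟩
  have hviol : ∀ r ∈ C, (∀ a ∈ r.neg, a ∉ I) → ¬ ((↑r.pos : Set A) ⊆ I) := by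
    intro r hr hneg hpos
    have h1 : modelsRule I ⟨r.head, r.pos, ∅⟩ := hmod _ ⟨r, Or.inr hr, hneg, rfl⟩
    have hb : r.head ∈ I := h1 ⟨hpos, by simp⟩
    rw [hC r hr] at hb
    exact hbot hb
  refine ⟨⟨hbot, fun r' hr' => hmod r' (hsub hr'), ?_⟩, hviol⟩
  intro J hJ hJm
  refine hmin J hJ ?_
  rintro r' ⟨r, hr | hr, hneg, rfl⟩
  · exact hJm _ ⟨r, hr, hneg, rfl⟩
  · rintro ⟨hpos, -⟩
    exact absurd (hpos.trans hJ.subset) (hviol r hr hneg)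

lemma sm_subset_heads {A : Type} (bot : A) (P : Set (Rule A)) (M : Set A)
    (hM : M ∈ SM bot P) : M ⊆ Rule.head '' P := by
  obtain ⟨hbot, hmod, hmin⟩ := hM
  intro a ha
  by_contra hah
  have hJ : M \ {a} ⊂ M := by exact Set.sdiff_singleton_ssubset.mpr ha
  refine hmin _ hJ ?_
  rintro r' ⟨r, hr, hneg, rfl⟩ ⟨hpos, -⟩
  have hhM : r.head ∈ M := hmod (Rule.mk r.head r.pos ∅) ⟨r, hr, hneg, rfl⟩
    ⟨hpos.trans Set.diff_subset, by simp⟩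
  exact ⟨hhM, fun h => hah (by rcases h with rfl; exact ⟨r, hr, rfl⟩)⟩

lemma sm_finite {A : Type} (bot : A) (P : Set (Rule A)) (hP : P.Finite) :
    (SM bot P).Finite :=
  (hP.image Rule.head).finite_subsets.subset fun M hM => sm_subset_heads bot P M hM

/-- Progress step of enumeration of models: a stable model of `P` together with the
constraints eliminating previously found stable models `I_1, …, I_k` is a stable model
of `P` different from all of them; consequently iteratively produced stable models are
pairwise distinct and enumeration stops after at most `|SM P|` iterations. -/
theorem enumeration_of_models_progress {A : Type} [Countable A] (bot : A)
    (P : Set (Rule A)) (hP : P.Finite)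
    (k : ℕ) (Is : Fin k → Finset A) (hIs : ∀ j, (↑(Is j) : Set A) ∈ SM bot P)
    (I : Set A) (hI : I ∈ SM bot (P ∪ Set.range fun j => Rule.mk bot (Is j) ∅)) :
    (I ∈ SM bot P ∧ ∀ j, I ≠ ↑(Is j)) ∧
    ∀ (m : ℕ) (Js : Fin m → Finset A),
      (∀ j : Fin m, (↑(Js j) : Set A) ∈
        SM bot (P ∪ {r | ∃ i : Fin m, i < j ∧ r = Rule.mk bot (Js i) ∅})) →
      (Function.Injective fun j : Fin m => (↑(Js j) : Set A)) ∧
      m ≤ Nat.card (SM bot P) := by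
  obtain ⟨hIsm, hviol⟩ := sm_union_constraints bot P _
    (by rintro r ⟨j, rfl⟩; rfl) I hI
  refine ⟨⟨hIsm, ?_⟩, ?_⟩
  · intro j hEq
    exact hviol _ ⟨j, rfl⟩ (by simp) (by rw [hEq])
  · intro m Js hJs
    have hJsm : ∀ j, (↑(Js j) : Set A) ∈ SM bot P := fun j =>
      (sm_union_constraints bot P _ (by rintro r ⟨i, hi, rfl⟩; rfl) _ (hJs j)).1
    have hne : ∀ i j : Fin m, i < j → (↑(Js i) : Set A) ≠ ↑(Js j) := by
      intro i j hij hEq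
      have h2 := (sm_union_constraints bot P _
        (by rintro r ⟨i', hi', rfl⟩; rfl) _ (hJs j)).2
      exact h2 (Rule.mk bot (Js i) ∅) ⟨i, hij, rfl⟩ (by simp) (by rw [hEq])
    have hinj : Function.Injective fun j : Fin m => (↑(Js j) : Set A) := by
      intro i j h
      rcases lt_trichotomy i j with h' | h' | h'
      · exact absurd h (hne i j h')
      · exact h'
      · exact absurd h.symm (hne j i h')
    refine ⟨hinj, ?_⟩
    have hfin := sm_finite bot P hP
    haveI := hfin.to_subtype
    have hf : Function.Injective (fun j : Fin m => (⟨↑(Js j), hJsm j⟩ : SM bot P)) :=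
      fun i j h => hinj (congrArg Subtype.val h)
    simpa using Nat.card_le_card_of_injective _ hf
end

section
/- Completeness of enumeration of models: let P be a normal logic program and I_1, …, I_k ∈ SM(P) (each finite). If SM(P ∪ {Constraint(I_1), …, Constraint(I_k)}) = ∅, then SM(P) = {I_1, …, I_k}, i.e., the enumerated models are all the stable models of P. -/
/-- Completeness of enumeration of models: if no further stable model exists after
eliminating `I_1, …, I_k`, then these are all the stable models of `P`. -/
theorem enumeration_of_models_complete {A : Type} [Countable A] (bot : A)
    (P : Set (Rule A)) (hP : P.Finite)
    (k : ℕ) (Is : Fin k → Finset A) (hIs : ∀ j, (↑(Is j) : Set A) ∈ SM bot P)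
    (h : SM bot (P ∪ Set.range fun j => Rule.mk bot (Is j) ∅) = ∅) :
    SM bot P = Set.range fun j => (↑(Is j) : Set A) := by
  ext M
  simp only [Set.mem_range]
  constructor
  · intro hM
    by_contra hnot
    push_neg at hnot
    have hMem : M ∈ SM bot (P ∪ Set.range fun j => Rule.mk bot (Is j) ∅) := by
      obtain ⟨hbot, hmod, hmin⟩ := hM
      refine ⟨hbot, ?_, ?_⟩
      · rintro r' ⟨s, hs, hneg, rfl⟩
        rcases hs with hsP | ⟨j, rfl⟩
        · exact hmod _ ⟨s, hsP, hneg, rfl⟩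
        · rintro ⟨hsub, -⟩
          exfalso
          by_cases heq : (↑(Is j) : Set A) = M
          · exact hnot j heq
          · obtain ⟨-, hjmod, -⟩ := hIs j
            apply hmin (↑(Is j)) (lt_of_le_of_ne hsub heq)
            rintro r' ⟨s, hsP, hneg, rfl⟩
            exact hjmod _ ⟨s, hsP, fun a ha haI => hneg a ha (hsub haI), rfl⟩
      · intro J hJ hJmod
        apply hmin J hJ
        rintro r' ⟨s, hsP, hneg, rfl⟩
        exact hJmod _ ⟨s, Or.inl hsP, hneg, rfl⟩
    rw [h] at hMem
    exact hMem
  · rintro ⟨j, rfl⟩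
    exact hIs j
end

section
/- Correctness of enumeration of models (semantic form of Theorem 1 for procedure A1): let P be a normal logic program, k ≥ 1, and I_1, …, I_k ∈ SM(P) (each finite) such that SM(P ∪ {Constraint(I_1), …, Constraint(I_k)}) = ∅. Then CC(P) = I_1 ∩ … ∩ I_k; in particular, for any set Q of atoms, Q ∩ CC(P) = Q ∩ I_1 ∩ … ∩ I_k. -/
/-- Correctness of enumeration of models: if no further stable model exists after
eliminating `I_1, …, I_k` (`k ≥ 1`), then `CC P` is the intersection of the enumerated
models, and the answers among any candidate set `Q` are `Q ∩ I_1 ∩ … ∩ I_k`. -/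
theorem enumeration_of_models_correct {A : Type} [Countable A] (bot : A)
    (P : Set (Rule A)) (hP : P.Finite)
    (k : ℕ) (hk : 1 ≤ k)
    (Is : Fin k → Finset A) (hIs : ∀ j, (↑(Is j) : Set A) ∈ SM bot P)
    (h : SM bot (P ∪ Set.range fun j => Rule.mk bot (Is j) ∅) = ∅) :
    CC bot P = (⋂ j, (↑(Is j) : Set A)) ∧
    ∀ Q : Set A, Q ∩ CC bot P = Q ∩ ⋂ j, (↑(Is j) : Set A) := by
  have key : ∀ M ∈ SM bot P, ∃ j, M = (↑(Is j) : Set A) := by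
    intro M hM
    by_contra hc
    push_neg at hc
    obtain ⟨hbot, hmod, hmin⟩ := hM
    have hM' : M ∈ SM bot (P ∪ Set.range fun j => Rule.mk bot (Is j) ∅) := by
      refine ⟨hbot, ?_, ?_⟩
      · intro r hr
        obtain ⟨r0, hr0, hneg, rfl⟩ := hr
        cases hr0 with
        | inl h0 => exact hmod _ ⟨r0, h0, hneg, rfl⟩
        | inr h0 =>
          obtain ⟨j, rfl⟩ := h0
          rintro ⟨hpos, -⟩
          exfalso
          obtain ⟨-, hmodj, -⟩ := hIs j
          have hsub : modelsProg (↑(Is j)) (reduct P M) := by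
            rintro r' ⟨r1, hr1, hneg1, rfl⟩
            exact hmodj _ ⟨r1, hr1, fun a ha hin => hneg1 a ha (hpos hin), rfl⟩
          have hne : (↑(Is j) : Set A) ≠ M := fun he => hc j he.symm
          exact hmin _ (HasSubset.Subset.ssubset_of_ne hpos hne) hsub
      · intro J hJ hJmod
        apply hmin J hJ
        rintro r ⟨r0, hr0, hneg, rfl⟩
        exact hJmod _ ⟨r0, Or.inl hr0, hneg, rfl⟩
    rw [h] at hM'
    exact hM'
  have heq : CC bot P = ⋂ j, (↑(Is j) : Set A) := by
    ext a
    simp only [CC, Set.mem_setOf_eq, Set.mem_iInter]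
    constructor
    · intro ha j
      exact ha _ (hIs j)
    · intro ha M hM
      obtain ⟨j, rfl⟩ := key M hM
      exact ha j
  exact ⟨heq, fun Q => by rw [heq]⟩
end

section
/- Correctness of the SAT encoding: the map σ ↦ I_σ is a bijection between the assignments σ satisfying the CNF formula φ and the stable models of the program P_φ; that is, for every assignment σ satisfying φ, I_σ ∈ SM(P_φ), and every stable model of P_φ equals I_σ for exactly one satisfying assignment σ. -/
/-- An assignment `σ` satisfies a CNF formula `φ` (clauses are finite sets of
literals; a literal is a pair (variable index, polarity)). -/
def satisfies {n : ℕ} (σ : Fin n → Bool) (φ : Finset (Finset (Fin n × Bool))) : Prop :=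
  ∀ c ∈ φ, ∃ l ∈ c, σ l.1 = l.2

/-- The ASP encoding `P_φ` of a CNF formula `φ`, using atoms `t i`, `f i`. -/
def Pphi {A : Type} [DecidableEq A] (bot : A) {n : ℕ} (t f : Fin n → A)
    (φ : Finset (Finset (Fin n × Bool))) : Set (Rule A) :=
  (Set.range fun i => Rule.mk (t i) ∅ {f i}) ∪
  (Set.range fun i => Rule.mk (f i) ∅ {t i}) ∪
  {r | ∃ c ∈ φ, r = Rule.mk bot
      (((c.filter fun l => l.2 = true).image fun l => f l.1) ∪
       ((c.filter fun l => l.2 = false).image fun l => t l.1)) ∅}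

/-- The interpretation `I_σ` corresponding to an assignment `σ`. -/
def Isig {A : Type} {n : ℕ} (t f : Fin n → A) (σ : Fin n → Bool) : Set A :=
  Set.range fun i => if σ i then t i else f i

/-- Correctness of the SAT encoding: `σ ↦ I_σ` is a bijection between satisfying
assignments of `φ` and stable models of `P_φ`. -/
theorem sat_encoding_correct {A : Type} [Countable A] [DecidableEq A] (bot : A)
    {n : ℕ} (t f : Fin n → A)
    (ht : Function.Injective t) (hf : Function.Injective f)
    (htf : ∀ i j, t i ≠ f j)
    (htbot : ∀ i, t i ≠ bot) (hfbot : ∀ i, f i ≠ bot)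
    (φ : Finset (Finset (Fin n × Bool))) :
    (∀ σ : Fin n → Bool, satisfies σ φ → Isig t f σ ∈ SM bot (Pphi bot t f φ)) ∧
    (∀ M ∈ SM bot (Pphi bot t f φ),
      ∃! σ : Fin n → Bool, satisfies σ φ ∧ M = Isig t f σ) := by

  classical
  have hIt : ∀ (σ : Fin n → Bool) i, t i ∈ Isig t f σ ↔ σ i = true := by
    intro σ i
    constructor
    · rintro ⟨j, hj⟩
      dsimp only at hj
      by_cases h : σ j = true
      · rw [if_pos h] at hj
        rwa [← ht hj]
      · rw [if_neg h] at hj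
        exact absurd hj.symm (htf i j)
    · intro h
      exact ⟨i, if_pos h⟩
  have hIf : ∀ (σ : Fin n → Bool) i, f i ∈ Isig t f σ ↔ σ i = false := by
    intro σ i
    constructor
    · rintro ⟨j, hj⟩
      dsimp only at hj
      by_cases h : σ j = true
      · rw [if_pos h] at hj
        exact absurd hj (htf j i)
      · rw [if_neg h] at hj
        simp only [Bool.not_eq_true] at h
        rw [← hf hj]
        exact h
    · intro h
      exact ⟨i, by simp [h]⟩
  have hIbot : ∀ σ : Fin n → Bool, bot ∉ Isig t f σ := by
    rintro σ ⟨j, hj⟩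
    dsimp only at hj
    by_cases h : σ j = true
    · rw [if_pos h] at hj; exact htbot j hj
    · rw [if_neg h] at hj; exact hfbot j hj
  constructor
  · intro σ hσ
    refine ⟨hIbot σ, ?_, ?_⟩
    · rintro r' ⟨r, ((⟨i, rfl⟩ | ⟨i, rfl⟩) | ⟨c, hc, rfl⟩), hneg, rfl⟩
      · intro _
        have hfi : f i ∉ Isig t f σ := hneg (f i) (by simp)
        have hσi : σ i = true := by
          rcases Bool.eq_false_or_eq_true (σ i) with h | h
          · exact h
          · exact absurd ((hIf σ i).mpr h) hfi
        exact (hIt σ i).mpr hσi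
      · intro _
        have hti : t i ∉ Isig t f σ := hneg (t i) (by simp)
        have hσi : σ i = false := by
          rcases Bool.eq_false_or_eq_true (σ i) with h | h
          · exact absurd ((hIt σ i).mpr h) hti
          · exact h
        exact (hIf σ i).mpr hσi
      · rintro ⟨hsub, -⟩
        obtain ⟨l, hl, hls⟩ := hσ c hc
        exfalso
        rcases Bool.eq_false_or_eq_true l.2 with h2 | h2
        swap
        · have hmem : t l.1 ∈ ((c.filter fun l => l.2 = true).image fun l => f l.1) ∪
              ((c.filter fun l => l.2 = false).image fun l => t l.1) :=
            Finset.mem_union_right _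
              (Finset.mem_image.mpr ⟨l, Finset.mem_filter.mpr ⟨hl, h2⟩, rfl⟩)
          have hin : t l.1 ∈ Isig t f σ := hsub hmem
          rw [hIt] at hin
          rw [hls, h2] at hin
          exact Bool.false_ne_true hin
        · have hmem : f l.1 ∈ ((c.filter fun l => l.2 = true).image fun l => f l.1) ∪
              ((c.filter fun l => l.2 = false).image fun l => t l.1) :=
            Finset.mem_union_left _
              (Finset.mem_image.mpr ⟨l, Finset.mem_filter.mpr ⟨hl, h2⟩, rfl⟩)
          have hin : f l.1 ∈ Isig t f σ := hsub hmem
          rw [hIf] at hin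
          rw [hls, h2] at hin
          exact Bool.false_ne_true hin.symm
    · intro J hJ hmodJ
      obtain ⟨x, hxI, hxJ⟩ := Set.exists_of_ssubset hJ
      obtain ⟨i, hi⟩ := hxI
      dsimp only at hi
      rcases Bool.eq_false_or_eq_true (σ i) with h | h
      swap
      · rw [if_neg (by simp [h])] at hi
        have hstep := hmodJ (Rule.mk (f i) ∅ ∅)
          ⟨Rule.mk (f i) ∅ {t i},
           Set.mem_union_left _ (Set.mem_union_right _ ⟨i, rfl⟩),
           by intro a ha; rw [Finset.mem_singleton] at ha; subst ha; rw [hIt]; simp [h],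
           rfl⟩ ⟨by simp, by simp⟩
        exact hxJ (hi ▸ hstep)
      · rw [if_pos h] at hi
        have hstep := hmodJ (Rule.mk (t i) ∅ ∅)
          ⟨Rule.mk (t i) ∅ {f i},
           Set.mem_union_left _ (Set.mem_union_left _ ⟨i, rfl⟩),
           by intro a ha; rw [Finset.mem_singleton] at ha; subst ha; rw [hIf]; simp [h],
           rfl⟩ ⟨by simp, by simp⟩
        exact hxJ (hi ▸ hstep)
  · rintro M ⟨hbotM, hmodM, hmin⟩
    have hAtLeastT : ∀ j, f j ∉ M → t j ∈ M := by
      intro j hfj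
      exact hmodM (Rule.mk (t j) ∅ ∅)
        ⟨Rule.mk (t j) ∅ {f j},
         Set.mem_union_left _ (Set.mem_union_left _ ⟨j, rfl⟩),
         by intro a ha; rw [Finset.mem_singleton] at ha; subst ha; exact hfj,
         rfl⟩ ⟨by simp, by simp⟩
    have hAtLeastF : ∀ j, t j ∉ M → f j ∈ M := by
      intro j htj
      exact hmodM (Rule.mk (f j) ∅ ∅)
        ⟨Rule.mk (f j) ∅ {t j},
         Set.mem_union_left _ (Set.mem_union_right _ ⟨j, rfl⟩),
         by intro a ha; rw [Finset.mem_singleton] at ha; subst ha; exact htj,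
         rfl⟩ ⟨by simp, by simp⟩
    have helper : ∀ J : Set A, J ⊆ M → (∀ j, f j ∉ M → t j ∈ J) →
        (∀ j, t j ∉ M → f j ∈ J) → modelsProg J (reduct (Pphi bot t f φ) M) := by
      intro J hJM h1 h2
      rintro r' ⟨r, ((⟨i, rfl⟩ | ⟨i, rfl⟩) | ⟨c, hc, rfl⟩), hneg, rfl⟩
      · intro _
        exact h1 i (hneg (f i) (by simp))
      · intro _
        exact h2 i (hneg (t i) (by simp))
      · rintro ⟨hsub, -⟩
        exfalso
        apply hbotM
        exact hmodM _
          ⟨_, Set.mem_union_right _ ⟨c, hc, rfl⟩, by simp, rfl⟩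
          ⟨hsub.trans hJM, by simp⟩
    have hNotBoth : ∀ j, t j ∈ M → f j ∉ M := by
      intro j htj hfj
      refine hmin (M \ {t j})
        ((Set.ssubset_iff_of_subset Set.diff_subset).mpr ⟨t j, htj, by simp⟩)
        (helper _ Set.diff_subset ?_ ?_)
      · intro k hk
        refine ⟨hAtLeastT k hk, ?_⟩
        intro heq
        rw [Set.mem_singleton_iff] at heq
        exact hk (by rw [ht heq]; exact hfj)
      · intro k hk
        refine ⟨hAtLeastF k hk, ?_⟩
        intro heq
        rw [Set.mem_singleton_iff] at heq
        exact htf j k heq.symm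
    have hRange : M ⊆ Set.range t ∪ Set.range f := by
      have hJ : modelsProg (M ∩ (Set.range t ∪ Set.range f)) (reduct (Pphi bot t f φ) M) :=
        helper _ Set.inter_subset_left
          (fun k hk => ⟨hAtLeastT k hk, Or.inl ⟨k, rfl⟩⟩)
          (fun k hk => ⟨hAtLeastF k hk, Or.inr ⟨k, rfl⟩⟩)
      have hns : ¬ (M ∩ (Set.range t ∪ Set.range f)) ⊂ M := fun h => hmin _ h hJ
      intro x hx
      by_contra hxr
      exact hns ((Set.ssubset_iff_of_subset Set.inter_subset_left).mpr
        ⟨x, hx, fun hxJ => hxr hxJ.2⟩)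
    set σ : Fin n → Bool := fun i => if t i ∈ M then true else false with hσdef
    have hσt : ∀ i, σ i = true ↔ t i ∈ M := by
      intro i
      by_cases h : t i ∈ M <;> simp [hσdef, h]
    have hMI : M = Isig t f σ := by
      ext x
      constructor
      · intro hx
        rcases hRange hx with ⟨i, rfl⟩ | ⟨i, rfl⟩
        · exact ⟨i, if_pos ((hσt i).mpr hx)⟩
        · have hti : t i ∉ M := fun h => hNotBoth i h hx
          have hfalse : σ i = false := by
            rcases Bool.eq_false_or_eq_true (σ i) with h | h
            · exact absurd ((hσt i).mp h) hti
            · exact h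
          exact ⟨i, by simp [hfalse]⟩
      · rintro ⟨i, hi⟩
        dsimp only at hi
        by_cases h : σ i = true
        · rw [if_pos h] at hi
          rw [← hi]
          exact (hσt i).mp h
        · rw [if_neg h] at hi
          rw [← hi]
          exact hAtLeastF i (fun hti => h ((hσt i).mpr hti))
    have hsat : satisfies σ φ := by
      intro c hc
      have hcon := hmodM _
        ⟨_, Set.mem_union_right _ ⟨c, hc, rfl⟩, by simp, rfl⟩
      have hnsub : ¬ ((↑(((c.filter fun l => l.2 = true).image fun l => f l.1) ∪
          ((c.filter fun l => l.2 = false).image fun l => t l.1)) : Set A) ⊆ M) :=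
        fun h => hbotM (hcon ⟨h, by simp⟩)
      obtain ⟨a, ha, haM⟩ := Set.not_subset.mp hnsub
      rw [Finset.mem_coe, Finset.mem_union] at ha
      rcases ha with ha | ha
      · obtain ⟨l, hlf, rfl⟩ := Finset.mem_image.mp ha
        obtain ⟨hlc, hl2⟩ := Finset.mem_filter.mp hlf
        exact ⟨l, hlc, by rw [hl2]; exact (hσt l.1).mpr (hAtLeastT l.1 haM)⟩
      · obtain ⟨l, hlf, rfl⟩ := Finset.mem_image.mp ha
        obtain ⟨hlc, hl2⟩ := Finset.mem_filter.mp hlf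
        refine ⟨l, hlc, ?_⟩
        rw [hl2]
        rcases Bool.eq_false_or_eq_true (σ l.1) with h | h
        · exact absurd ((hσt l.1).mp h) haM
        · exact h
    refine ⟨σ, ⟨hsat, hMI⟩, ?_⟩
    rintro σ' ⟨-, hM'⟩
    funext i
    have h1 : σ' i = true ↔ t i ∈ M := by
      rw [hM']
      exact (hIt σ' i).symm
    exact Bool.eq_iff_iff.mpr (h1.trans (hσt i).symm)
end
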